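/- Let n ≥ 2 be an integer and c ∈ ℂ with Im(c) ≠ 0, |c| > 1, |c+1| ≤ √(2n), and |c−1| ≤ √(2n) (i.e., c ∈ X_n, with X_n defined using the index (2n-1+1)/2 = n). Then the rectangle R(c, 2n−1) is contained in E(c, 2n−1). -/

import Mathlib

set_option maxHeartbeats 1000000

/-- `A n = {-n+1, -n+3, ..., n-1} ⊂ ℂ`. -/
def Acoef (n : ℕ) : Set ℂ := {x | ∃ k : ℕ, k < n ∧ x = (n : ℂ) - 1 - 2 * k}

/-- The collinear fractal `E(c,n)`. -/
def E (c : ℂ) (n : ℕ) : Set ℂ :=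
  {z | ∃ a : ℕ → ℂ, (∀ k, a k ∈ Acoef n) ∧ HasSum (fun k => a k / c ^ k) z}

/-- The vertex `ψ(c,n)` of the rectangle `R(c,n)`. -/
noncomputable def psi (c : ℂ) (n : ℕ) : ℂ :=
  if 0 ≤ c.re then c * (n + 1) / (1 + c) else c * (n + 1) / (1 - c)

/-- The closed solid axis-parallel rectangle centered at `0` with vertices
`±ψ(c,n)`, `±conj(ψ(c,n))`. -/
noncomputable def R (c : ℂ) (n : ℕ) : Set ℂ :=
  {z | |z.re| ≤ |(psi c n).re| ∧ |z.im| ≤ |(psi c n).im|}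

lemma exists_even_near (n : ℕ) (hn : 2 ≤ n) (u : ℝ) (hu : |u| ≤ 2*n - 1) :
    ∃ j : ℤ, |j| ≤ (n:ℤ) - 1 ∧ |u - 2*j| ≤ 1 := by
  set j : ℤ := max (-(n:ℤ) + 1) (min ((n:ℤ) - 1) (round (u/2))) with hj
  refine ⟨j, ?_, ?_⟩
  · have hup : j ≤ (n:ℤ) - 1 := by
      apply max_le
      · omega
      · exact min_le_left _ _
    have hlo : -(n:ℤ) + 1 ≤ j := le_max_left _ _
    rw [abs_le]; omega
  · have hu2 : |u/2| ≤ (n:ℝ) - 1/2 := by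
      rw [abs_div, abs_two]; linarith
    have key : |u/2 - (j:ℝ)| ≤ 1/2 := by
      have hr := abs_sub_round (u/2)
      rcases le_or_gt (round (u/2)) (-(n:ℤ) + 1) with h1 | h1
      · have hjv : j = -(n:ℤ) + 1 := by
          rw [hj, max_eq_left (min_le_of_right_le h1)]
        rw [hjv]
        -- u/2 ≥ -(n - 1/2), and u/2 ≤ round + 1/2 ≤ -n + 3/2
        have h2 : (u/2) ≤ (round (u/2) : ℝ) + 1/2 := by
          have := abs_sub_round (u/2); rw [abs_le] at this; linarith [this.1]
        have h3 : ((round (u/2) : ℤ) : ℝ) ≤ -(n:ℝ) + 1 := by exact_mod_cast Int.cast_le.2 h1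
        rw [abs_le] at hu2 ⊢
        push_cast
        constructor <;> linarith [hu2.1]
      · rcases le_or_gt ((n:ℤ) - 1) (round (u/2)) with h2 | h2
        · have hjv : j = (n:ℤ) - 1 := by
            rw [hj, min_eq_left h2, max_eq_right (by omega)]
          rw [hjv]
          have h4 : (round (u/2) : ℝ) - 1/2 ≤ u/2 := by
            have := abs_sub_round (u/2); rw [abs_le] at this; linarith [this.2]
          have h3 : ((n:ℝ)) - 1 ≤ ((round (u/2) : ℤ) : ℝ) := by
            have : ((n:ℤ) - 1 : ℤ) ≤ round (u/2) := h2
            exact_mod_cast this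
          rw [abs_le] at hu2 ⊢
          push_cast
          constructor <;> linarith [hu2.2]
        · have hjv : j = round (u/2) := by
            rw [hj, min_eq_right (by omega), max_eq_right (by omega)]
          rw [hjv]; exact hr
    have heq : u - 2*(j:ℝ) = 2*(u/2 - (j:ℝ)) := by ring
    rw [heq, abs_mul, abs_two]
    linarith

lemma psi_im (c : ℂ) (m : ℕ) :
    (psi c m).im = ((m:ℝ)+1) * c.im / ((1+|c.re|)^2 + c.im^2) := by
  unfold psi
  rcases le_or_gt 0 c.re with h | h
  · rw [if_pos h, Complex.div_im]
    rw [abs_of_nonneg h]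
    simp [Complex.normSq_apply]
    ring_nf
  · rw [if_neg (not_le.2 h), Complex.div_im]
    rw [abs_of_neg h]
    simp [Complex.normSq_apply]
    ring_nf

lemma psi_re_abs (c : ℂ) (m : ℕ) :
    |(psi c m).re| = ((m:ℝ)+1) * (|c.re| + c.re^2 + c.im^2) / ((1+|c.re|)^2 + c.im^2) := by
  unfold psi
  rcases le_or_gt 0 c.re with h | h
  · rw [if_pos h]
    have : (c * (↑m + 1) / (1 + c)).re = ((m:ℝ)+1) * (|c.re| + c.re^2 + c.im^2) / ((1+|c.re|)^2 + c.im^2) := by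
      rw [Complex.div_re, abs_of_nonneg h]
      simp [Complex.normSq_apply]
      ring_nf
    rw [this, abs_of_nonneg (by positivity)]
  · rw [if_neg (not_le.2 h)]
    have : (c * (↑m + 1) / (1 - c)).re = -(((m:ℝ)+1) * (|c.re| + c.re^2 + c.im^2) / ((1+|c.re|)^2 + c.im^2)) := by
      rw [Complex.div_re, abs_of_neg h]
      simp [Complex.normSq_apply]
      ring_nf
    rw [this, abs_neg, abs_of_nonneg (by positivity)]

lemma key (n : ℕ) (hn : 2 ≤ n) (p q x y : ℝ) (hq : q ≠ 0)
    (hD : (1+|p|)^2 + q^2 ≤ 2*n)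
    (hx : |x| ≤ 2*n*(|p| + p^2 + q^2)/((1+|p|)^2+q^2))
    (hy : |y| ≤ 2*n*|q|/((1+|p|)^2+q^2)) :
    ∃ j : ℤ, |j| ≤ (n:ℤ) - 1 ∧
      |q*(x-2*j) + p*y| ≤ 2*n*|q|/((1+|p|)^2+q^2) ∧
      |p*(x-2*j) - q*y| ≤ 2*n*(|p|+p^2+q^2)/((1+|p|)^2+q^2) := by
  set D : ℝ := (1+|p|)^2 + q^2 with hDdef
  have hD1 : (1:ℝ) ≤ D := by nlinarith [abs_nonneg p, sq_nonneg q]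
  have hD0 : (0:ℝ) < D := by linarith
  have hQ0 : (0:ℝ) < |q| := abs_pos.2 hq
  have hDM : D ≤ 2*(n:ℝ) := hD
  have hM0 : (0:ℝ) < 2*n := by positivity  -- n ≥ 2 > 0? n could cast... n≥2 so fine
  -- |y|/|q| ≤ 2n/D
  have hyq : |y| / |q| ≤ 2*(n:ℝ)/D := by
    rw [div_le_div_iff₀ hQ0 hD0]
    calc |y| * D ≤ (2*(n:ℝ)*|q|/D) * D := mul_le_mul_of_nonneg_right hy hD0.le
    _ = 2*(n:ℝ)*|q| := by field_simp
  -- the center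
  set u : ℝ := x + p*y/q with hu
  have hcenter : |u| ≤ 2*(n:ℝ) - 1 := by
    have h1 : |p*y/q| = |p| * (|y|/|q|) := by
      rw [abs_div, abs_mul, mul_div_assoc]
    have h2 : |u| ≤ |x| + |p| * (|y|/|q|) := by
      calc |u| ≤ |x| + |p*y/q| := abs_add_le _ _
      _ = |x| + |p| * (|y|/|q|) := by rw [h1]
    have h3 : |p| * (|y|/|q|) ≤ |p| * (2*n/D) :=
      mul_le_mul_of_nonneg_left hyq (abs_nonneg p)
    have h4 : |x| + |p| * (2*(n:ℝ)/D) ≤ 2*n*(|p|+p^2+q^2)/D + 2*n*|p|/D := by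
      have : |p| * (2*(n:ℝ)/D) = 2*n*|p|/D := by ring
      linarith [hx, this.le, this.ge]
    have h5 : 2*(n:ℝ)*(|p|+p^2+q^2)/D + 2*n*|p|/D = 2*n*(D-1)/D := by
      have hp2 : |p|^2 = p^2 := sq_abs p
      field_simp
      ring_nf
      nlinarith [sq_abs p]
    have h6 : 2*(n:ℝ)*(D-1)/D = 2*n - 2*n/D := by
      field_simp
    have h7 : (1:ℝ) ≤ 2*(n:ℝ)/D := by
      rw [le_div_iff₀ hD0]; linarith
    linarith
  obtain ⟨j, hj1, hj2⟩ := exists_even_near n hn u hcenter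
  refine ⟨j, hj1, ?_, ?_⟩
  · -- q*(x-2j) + p*y = q*(u - 2j)
    have heq : q*(x-2*j) + p*y = q*(u - 2*j) := by
      rw [hu]; field_simp; ring
    rw [heq, abs_mul]
    calc |q| * |u - 2*(j:ℝ)| ≤ |q| * 1 := mul_le_mul_of_nonneg_left hj2 (abs_nonneg q)
    _ = |q| := mul_one _
    _ ≤ 2*n*|q|/D := by
        rw [le_div_iff₀ hD0]; nlinarith
  · -- p*(x-2j) - q*y = p*(u-2j) - (p^2+q^2)*y/q
    have heq : p*(x-2*j) - q*y = p*(u - 2*j) - (p^2+q^2)*(y/q) := by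
      rw [hu]; field_simp; ring
    rw [heq]
    have hb1 : |p*(u - 2*j)| ≤ |p| := by
      rw [abs_mul]
      calc |p| * |u - 2*(j:ℝ)| ≤ |p| * 1 := mul_le_mul_of_nonneg_left hj2 (abs_nonneg p)
      _ = |p| := mul_one _
    have hb2 : |(p^2+q^2)*(y/q)| ≤ (p^2+q^2) * (2*n/D) := by
      rw [abs_mul, abs_of_nonneg (by positivity : (0:ℝ) ≤ p^2+q^2), abs_div]
      exact mul_le_mul_of_nonneg_left hyq (by positivity)
    calc |p*(u - 2*j) - (p^2+q^2)*(y/q)| ≤ |p*(u - 2*j)| + |(p^2+q^2)*(y/q)| :=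
        abs_sub _ _
    _ ≤ |p| + (p^2+q^2) * (2*n/D) := add_le_add hb1 hb2
    _ ≤ 2*n*|p|/D + 2*n*(p^2+q^2)/D := by
        have e1 : (p^2+q^2) * (2*(n:ℝ)/D) = 2*n*(p^2+q^2)/D := by ring
        have e2 : |p| ≤ 2*(n:ℝ)*|p|/D := by
          rw [le_div_iff₀ hD0]; nlinarith [abs_nonneg p]
        linarith
    _ = 2*n*(|p|+p^2+q^2)/D := by ring

lemma step (n : ℕ) (hn : 2 ≤ n) (c : ℂ) (hq : c.im ≠ 0)
    (hD : (1+|c.re|)^2 + c.im^2 ≤ 2*n) :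
    ∀ z ∈ R c (2*n-1), ∃ t ∈ Acoef (2*n-1), c * (z - t) ∈ R c (2*n-1) := by
  intro z hz
  have hM : ((2*n-1 : ℕ):ℝ) + 1 = 2*(n:ℝ) := by
    have h1 : (1:ℕ) ≤ 2*n := by omega
    push_cast [Nat.cast_sub h1]
    ring
  have habsim : |(psi c (2*n-1)).im| = 2*(n:ℝ)*|c.im| / ((1+|c.re|)^2 + c.im^2) := by
    rw [psi_im, hM, abs_div, abs_mul]
    congr 1
    · congr 1
      rw [abs_of_nonneg (by positivity : (0:ℝ) ≤ 2*(n:ℝ))]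
    · rw [abs_of_nonneg (by positivity : (0:ℝ) ≤ (1+|c.re|)^2 + c.im^2)]
  have habsre : |(psi c (2*n-1)).re| = 2*(n:ℝ)*(|c.re| + c.re^2 + c.im^2) / ((1+|c.re|)^2 + c.im^2) := by
    rw [psi_re_abs, hM]
  obtain ⟨hz1, hz2⟩ := hz
  rw [habsre] at hz1
  rw [habsim] at hz2
  obtain ⟨j, hj, him, hre⟩ := key n hn c.re c.im z.re z.im hq hD hz1 hz2
  refine ⟨((2*j : ℤ) : ℂ), ?_, ?_, ?_⟩
  · -- Acoef membership
    refine ⟨((n:ℤ) - 1 - j).toNat, ?_, ?_⟩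
    · rw [abs_le] at hj; omega
    · rw [abs_le] at hj
      have h0 : (0:ℤ) ≤ (n:ℤ) - 1 - j := by omega
      have h1 : (((((n:ℤ) - 1 - j).toNat : ℕ)) : ℂ) = (((n:ℤ) - 1 - j : ℤ) : ℂ) := by
        exact_mod_cast congrArg (fun a : ℤ => (a : ℂ)) (Int.toNat_of_nonneg h0)
      rw [h1]
      have h2 : (((2*n-1 : ℕ)) : ℂ) = 2*(n:ℂ) - 1 := by
        have h3 : (1:ℕ) ≤ 2*n := by omega
        push_cast [Nat.cast_sub h3]; ring
      rw [h2]
      push_cast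
      ring
  · -- real part bound
    rw [habsre]
    have e : (c * (z - ((2*j : ℤ) : ℂ))).re = c.re*(z.re-2*j) - c.im*z.im := by
      simp only [Complex.mul_re, Complex.sub_re, Complex.sub_im,
        Complex.intCast_re, Complex.intCast_im]
      push_cast
      ring
    rw [e]
    exact hre
  · rw [habsim]
    have e : (c * (z - ((2*j : ℤ) : ℂ))).im = c.im*(z.re-2*j) + c.re*z.im := by
      simp only [Complex.mul_im, Complex.sub_re, Complex.sub_im,
        Complex.intCast_re, Complex.intCast_im]
      push_cast
      ring
    rw [e]
    exact him

lemma Acoef_abs {m : ℕ} {t : ℂ} (ht : t ∈ Acoef m) : ‖t‖ ≤ m := by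
  obtain ⟨k, hk, rfl⟩ := ht
  have e : ((m:ℂ) - 1 - 2*k) = (((m:ℝ) - 1 - 2*(k:ℝ) : ℝ) : ℂ) := by push_cast; ring
  rw [e, Complex.norm_real, Real.norm_eq_abs]
  have hk' : (k:ℝ) + 1 ≤ (m:ℝ) := by exact_mod_cast hk
  have hk0 : (0:ℝ) ≤ (k:ℝ) := Nat.cast_nonneg k
  rw [abs_le]
  constructor <;> linarith

theorem rect_subset_E (n : ℕ) (hn : 2 ≤ n) (c : ℂ)
    (hIm : c.im ≠ 0) (hc : 1 < ‖c‖)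
    (h1 : ‖c + 1‖ ≤ Real.sqrt (2 * n))
    (h2 : ‖c - 1‖ ≤ Real.sqrt (2 * n)) :
    R c (2 * n - 1) ⊆ E c (2 * n - 1) := by
  intro z hz
  have h2n0 : (0:ℝ) ≤ 2*(n:ℝ) := by positivity
  have hD : (1+|c.re|)^2 + c.im^2 ≤ 2*n := by
    rcases le_or_gt 0 c.re with h | h
    · have e : (‖c+1‖)^2 = (c.re+1)^2 + c.im^2 := by
        rw [Complex.sq_norm, Complex.normSq_apply]
        simp [Complex.add_re, Complex.add_im]
        ring
      have hs : (‖c+1‖)^2 ≤ 2*n := by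
        calc (‖c+1‖)^2 ≤ (Real.sqrt (2*n))^2 :=
          pow_le_pow_left₀ (norm_nonneg _) h1 2
        _ = 2*n := Real.sq_sqrt h2n0
      rw [abs_of_nonneg h]
      nlinarith [e, hs]
    · have e : (‖c-1‖)^2 = (c.re-1)^2 + c.im^2 := by
        rw [Complex.sq_norm, Complex.normSq_apply]
        simp [Complex.sub_re, Complex.sub_im]
        ring
      have hs : (‖c-1‖)^2 ≤ 2*n := by
        calc (‖c-1‖)^2 ≤ (Real.sqrt (2*n))^2 :=
          pow_le_pow_left₀ (norm_nonneg _) h2 2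
        _ = 2*n := Real.sq_sqrt h2n0
      rw [abs_of_neg h]
      nlinarith [e, hs]
  have hc0 : c ≠ 0 := by
    intro h; rw [h] at hc; simp at hc; linarith
  set m : ℕ := 2*n - 1 with hm
  choose T hT1 hT2 using step n hn c hIm hD
  -- the sequence of remainders
  let w : ℕ → {u : ℂ // u ∈ R c m} := fun k =>
    Nat.rec ⟨z, hz⟩ (fun _ u => ⟨c * (u.1 - T u.1 u.2), hT2 u.1 u.2⟩) k
  set a : ℕ → ℂ := fun k => T (w k).1 (w k).2 with ha
  have hwsucc : ∀ k, (w (k+1)).1 = c * ((w k).1 - a k) := fun k => rfl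
  have haA : ∀ k, a k ∈ Acoef m := fun k => hT1 _ _
  -- the invariant
  have hinv : ∀ k, z = (∑ i ∈ Finset.range k, a i / c^i) + (w k).1 / c^k := by
    intro k
    induction k with
    | zero => simp [w]
    | succ k ih =>
      rw [Finset.sum_range_succ]
      have hck : (c:ℂ)^k ≠ 0 := pow_ne_zero _ hc0
      have e1 : (w (k+1)).1 / c^(k+1) = (w k).1 / c^k - a k / c^k := by
        rw [hwsucc k]
        field_simp
        ring
      rw [e1]
      rw [ih]
      ring
  -- bound on remainders
  set C : ℝ := |(psi c m).re| + |(psi c m).im| with hC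
  have hwb : ∀ k, ‖(w k).1‖ ≤ C := by
    intro k
    have h := (w k).2
    calc ‖(w k).1‖ ≤ |(w k).1.re| + |(w k).1.im| :=
      Complex.norm_le_abs_re_add_abs_im _
    _ ≤ C := add_le_add h.1 h.2
  -- geometric facts
  have habs : (0:ℝ) < ‖c‖ := lt_trans one_pos hc
  have hinv1 : (‖c‖)⁻¹ < 1 := by
    rw [inv_lt_one_iff₀]; right; exact hc
  have hinv0 : (0:ℝ) ≤ (‖c‖)⁻¹ := by positivity
  -- summability
  have hsum : Summable (fun k => a k / c^k) := by
    apply Summable.of_norm_bounded (g := fun k => (m:ℝ) * ((‖c‖)⁻¹)^k)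
    · exact (summable_geometric_of_lt_one hinv0 hinv1).mul_left _
    · intro k
      have : ‖a k / c^k‖ = ‖a k‖ / (‖c‖)^k := by
        rw [norm_div, norm_pow]
      rw [this, div_eq_mul_inv, ← inv_pow]
      exact mul_le_mul_of_nonneg_right (Acoef_abs (haA k)) (by positivity)
  -- remainder tends to zero
  have hrem : Filter.Tendsto (fun k => (w k).1 / c^k) Filter.atTop (nhds 0) := by
    refine squeeze_zero_norm (a := fun k => C * ((‖c‖)⁻¹)^k) ?_ ?_
    · intro k
      have : ‖(w k).1 / c^k‖ = ‖(w k).1‖ / (‖c‖)^k := by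
        rw [norm_div, norm_pow]
      rw [this, div_eq_mul_inv, ← inv_pow]
      exact mul_le_mul_of_nonneg_right (hwb k) (by positivity)
    · have := tendsto_pow_atTop_nhds_zero_of_lt_one hinv0 hinv1
      simpa using this.const_mul C
  have htend : Filter.Tendsto (fun k => ∑ i ∈ Finset.range k, a i / c^i)
      Filter.atTop (nhds z) := by
    have e : (fun k => ∑ i ∈ Finset.range k, a i / c^i)
        = fun k => z - (w k).1 / c^k := by
      funext k
      rw [hinv k]; ring
    rw [e]
    simpa using Filter.Tendsto.sub (tendsto_const_nhds (x := z)) hrem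
  exact ⟨a, haA, (Summable.hasSum_iff_tendsto_nat hsum).2 htend⟩
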